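/- For the gl_{1|1} R-matrix R = ((q,0,0,0),(0,1,q−q⁻¹,0),(0,0,1,0),(0,0,0,−q⁻¹)) with q² ≠ 0,1, the braided-Lie brackets computed from c^{IJ}_K satisfy [b,c] = −(q²−1)ξ = q²[c,b], [a,a] = a, [a,b] = q⁻²b, [a,c] = q²c, and [ξ,a] = −(q²−1)²q⁻² ξ, where ξ = d − a. -/
import Mathlib
set_option maxRecDepth 40000
set_option maxHeartbeats 2000000


open Matrix

variable {k : Type*} [Field k] {n : ℕ}

/-- Pairs of indices, labelling a basis of `V ⊗ V` (or multi-indices `I = (i₀, i₁)`). -/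
abbrev I2 (n : ℕ) := Fin n × Fin n

/-- Triples of indices, labelling a basis of `V ⊗ V ⊗ V`. -/
abbrev I3 (n : ℕ) := Fin n × Fin n × Fin n

/-- `A₁₂ = A ⊗ id`, the lift of an operator on `V ⊗ V` to the first two factors of
`V ⊗ V ⊗ V`. -/
def amp12 (A : Matrix (I2 n) (I2 n) k) : Matrix (I3 n) (I3 n) k :=
  Matrix.of fun p q => A (p.1, p.2.1) (q.1, q.2.1) * (if p.2.2 = q.2.2 then 1 else 0)

/-- `A₁₃`, acting on the first and third factors of `V ⊗ V ⊗ V`. -/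
def amp13 (A : Matrix (I2 n) (I2 n) k) : Matrix (I3 n) (I3 n) k :=
  Matrix.of fun p q => A (p.1, p.2.2) (q.1, q.2.2) * (if p.2.1 = q.2.1 then 1 else 0)

/-- `A₂₃`, acting on the last two factors of `V ⊗ V ⊗ V`. -/
def amp23 (A : Matrix (I2 n) (I2 n) k) : Matrix (I3 n) (I3 n) k :=
  Matrix.of fun p q => A (p.2.1, p.2.2) (q.2.1, q.2.2) * (if p.1 = q.1 then 1 else 0)

/-- `A₂₁ = τ ∘ A ∘ τ`, conjugation by the flip of the two tensor factors. -/
def flipM (A : Matrix (I2 n) (I2 n) k) : Matrix (I2 n) (I2 n) k :=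
  Matrix.of fun p q => A (p.2, p.1) (q.2, q.1)

/-- The quantum Yang–Baxter equation `R₁₂R₁₃R₂₃ = R₂₃R₁₃R₁₂`. -/
def QYBE (R : Matrix (I2 n) (I2 n) k) : Prop :=
  amp12 R * amp13 R * amp23 R = amp23 R * amp13 R * amp12 R

/-- `Rtil` is the second inverse `R̃ = ((R^{t₂})⁻¹)^{t₂}` of `R`, characterized by
`R̃ⁱₐᵇₗ Rᵃⱼᵏᵦ = δⁱⱼ δᵏₗ = Rⁱₐᵇₗ R̃ᵃⱼᵏᵦ` (sum over `a`, `b`).  Here the entry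
`R ((i,k),(j,l))` denotes `Rⁱⱼᵏₗ`. -/
def IsSecondInverse (R Rtil : Matrix (I2 n) (I2 n) k) : Prop :=
  (∀ i j kk l : Fin n, ∑ a, ∑ b, Rtil (i, b) (a, l) * R (a, kk) (j, b)
      = (if i = j then (1 : k) else 0) * (if kk = l then 1 else 0)) ∧
  (∀ i j kk l : Fin n, ∑ a, ∑ b, R (i, b) (a, l) * Rtil (a, kk) (j, b)
      = (if i = j then (1 : k) else 0) * (if kk = l then 1 else 0))

/-- The structure constants
`c^{IJ}_K = R̃ᵃ_{i₁}{}^{j₀}_b R⁻¹{}ᵇ_{k₀}{}^{i₀}_c R^{k₁}_n{}ᶜ_m Rᵐₐ{}ⁿ_{j₁}`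
of the matrix braided-Lie algebra associated to a bi-invertible R-matrix
(repeated indices summed). -/
def braidedC (R Rinv Rtil : Matrix (I2 n) (I2 n) k) (I J K : I2 n) : k :=
  ∑ a, ∑ b, ∑ c, ∑ m, ∑ nn,
    Rtil (a, J.1) (I.2, b) * Rinv (b, I.1) (K.1, c) *
      R (K.2, c) (nn, m) * R (m, nn) (a, J.2)

/-- The standard `GL_q(2)` R-matrix `((q,0,0,0),(0,1,q−q⁻¹,0),(0,0,1,0),(0,0,0,q))`,
with rows labelled `(i,k)` and columns `(j,l)` in the order `(1,1),(1,2),(2,1),(2,2)`. -/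
def Rgl2 (k : Type*) [Field k] (q : k) : Matrix (I2 2) (I2 2) k :=
  Matrix.of fun p r =>
    if p = r then (if p = ((0 : Fin 2), (0 : Fin 2)) ∨ p = (1, 1) then q else 1)
    else if p = ((0 : Fin 2), (1 : Fin 2)) ∧ r = (1, 0) then q - q⁻¹ else 0

/-- The `gl_{1|1}` (Alexander–Conway) R-matrix
`((q,0,0,0),(0,1,q−q⁻¹,0),(0,0,1,0),(0,0,0,−q⁻¹))`. -/
def Rgl11 (k : Type*) [Field k] (q : k) : Matrix (I2 2) (I2 2) k :=
  Matrix.of fun p r =>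
    if p = r then
      (if p = ((0 : Fin 2), (0 : Fin 2)) then q else if p = (1, 1) then -q⁻¹ else 1)
    else if p = ((0 : Fin 2), (1 : Fin 2)) ∧ r = (1, 0) then q - q⁻¹ else 0

/-- The braided-Lie bracket extended bilinearly to coefficient vectors with respect to the
basis `u^I`: `Br(x, y)_K = Σ_{I,J} x_I y_J c^{IJ}_K`. -/
def Br {k : Type*} [Field k] (R Rinv Rtil : Matrix (I2 2) (I2 2) k)
    (x y : I2 2 → k) : I2 2 → k :=
  fun K => ∑ I, ∑ J, x I * y J * braidedC R Rinv Rtil I J K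

/-- Coefficient vector of the generator `a = u¹₁`. -/
def va (k : Type*) [Field k] : I2 2 → k := fun K => if K = (0, 0) then 1 else 0

/-- Coefficient vector of the generator `b = u¹₂`. -/
def vb (k : Type*) [Field k] : I2 2 → k := fun K => if K = (0, 1) then 1 else 0

/-- Coefficient vector of the generator `c = u²₁`. -/
def vc (k : Type*) [Field k] : I2 2 → k := fun K => if K = (1, 0) then 1 else 0

/-- Coefficient vector of the generator `d = u²₂`. -/
def vd (k : Type*) [Field k] : I2 2 → k := fun K => if K = (1, 1) then 1 else 0

/-- Explicit inverse of the `gl_{1|1}` R-matrix. -/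
def RinvE (k : Type*) [Field k] (q : k) : Matrix (I2 2) (I2 2) k :=
  Matrix.of fun p r =>
    if p = r then
      (if p = ((0 : Fin 2), (0 : Fin 2)) then q⁻¹ else if p = (1, 1) then -q else 1)
    else if p = ((0 : Fin 2), (1 : Fin 2)) ∧ r = (1, 0) then -(q - q⁻¹) else 0

/-- Explicit second inverse of the `gl_{1|1}` R-matrix. -/
def RtilE (k : Type*) [Field k] (q : k) : Matrix (I2 2) (I2 2) k :=
  Matrix.of fun p r =>
    if p = r then
      (if p = ((0 : Fin 2), (0 : Fin 2)) then q⁻¹ else if p = (1, 1) then -q else 1)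
    else if p = ((0 : Fin 2), (1 : Fin 2)) ∧ r = (1, 0) then q - q⁻¹ else 0

/-- Reindexing turning the second-inverse relations into honest matrix multiplication. -/
def tflip {k : Type*} [Field k] (A : Matrix (I2 2) (I2 2) k) : Matrix (I2 2) (I2 2) k :=
  Matrix.of fun p r => A (p.1, r.2) (r.1, p.2)

lemma RinvE_left (q : k) (hq0 : q ≠ 0) : Rgl11 k q * RinvE k q = 1 := by
  ext ⟨i, j⟩ ⟨a, b⟩
  fin_cases i <;> fin_cases j <;> fin_cases a <;> fin_cases b <;>
    · simp only [Matrix.mul_apply, Fintype.sum_prod_type, Fin.sum_univ_two, Rgl11, RinvE,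
        Matrix.one_apply, Matrix.of_apply, Prod.mk.injEq, Fin.isValue]
      norm_num
      try field_simp
      try ring

lemma tflip_mul_RtilE (q : k) (hq0 : q ≠ 0) :
    tflip (Rgl11 k q) * tflip (RtilE k q) = 1 := by
  ext ⟨i, j⟩ ⟨a, b⟩
  fin_cases i <;> fin_cases j <;> fin_cases a <;> fin_cases b <;>
    · simp only [Matrix.mul_apply, Fintype.sum_prod_type, Fin.sum_univ_two, Rgl11, RtilE,
        tflip, Matrix.one_apply, Matrix.of_apply, Prod.mk.injEq, Fin.isValue]
      norm_num
      try field_simp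
      try ring

lemma Rtil_eq (q : k) (hq0 : q ≠ 0) (Rtil : Matrix (I2 2) (I2 2) k)
    (ht : IsSecondInverse (Rgl11 k q) Rtil) : Rtil = RtilE k q := by
  have h1 : tflip Rtil * tflip (Rgl11 k q) = 1 := by
    ext ⟨i, l⟩ ⟨j, kk⟩
    rw [Matrix.mul_apply, Fintype.sum_prod_type]
    have := ht.1 i j kk l
    simp only [tflip, Matrix.of_apply] at this ⊢
    rw [this, Matrix.one_apply]
    rcases eq_or_ne i j with hij | hij <;> rcases eq_or_ne kk l with hkl | hkl
    · simp [hij, hkl, Prod.ext_iff]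
    · simp [hij, hkl, hkl.symm, Prod.ext_iff]
    · simp [hij, hkl, Prod.ext_iff]
    · simp [hij, hkl, Prod.ext_iff]
  have key : tflip Rtil = tflip (RtilE k q) := by
    calc tflip Rtil = tflip Rtil * (tflip (Rgl11 k q) * tflip (RtilE k q)) := by
          rw [tflip_mul_RtilE q hq0, mul_one]
      _ = (tflip Rtil * tflip (Rgl11 k q)) * tflip (RtilE k q) := by rw [mul_assoc]
      _ = tflip (RtilE k q) := by rw [h1, one_mul]
  ext ⟨x, y⟩ ⟨u, v⟩
  exact congrFun (congrFun key (x, v)) (u, y)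

lemma Br_delta (R Ri Rt : Matrix (I2 2) (I2 2) k) (I0 J0 : I2 2) :
    Br R Ri Rt (fun K => if K = I0 then (1 : k) else 0)
      (fun K => if K = J0 then (1 : k) else 0) = braidedC R Ri Rt I0 J0 := by
  funext K
  simp [Br, ite_mul, zero_mul, one_mul, Finset.sum_ite_eq']

lemma Br_sub_left (R Ri Rt : Matrix (I2 2) (I2 2) k) (x x' y : I2 2 → k) :
    Br R Ri Rt (x - x') y = Br R Ri Rt x y - Br R Ri Rt x' y := by
  funext K
  simp [Br, Pi.sub_apply, sub_mul, Finset.sum_sub_distrib]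

/-- For the `gl_{1|1}` R-matrix with `q² ≠ 0,1`, the braided-Lie brackets satisfy
`[b,c] = −(q²−1)ξ = q²[c,b]`, `[a,a] = a`, `[a,b] = q⁻²b`, `[a,c] = q²c`, and
`[ξ,a] = −(q²−1)²q⁻² ξ`, where `ξ = d − a`. -/
theorem gl11_braided_brackets (q : k) (hq0 : q ≠ 0) (hq1 : q ^ 2 ≠ 1)
    (Rinv Rtil : Matrix (I2 2) (I2 2) k)
    (h1 : Rgl11 k q * Rinv = 1) (h2 : Rinv * Rgl11 k q = 1)
    (ht : IsSecondInverse (Rgl11 k q) Rtil) :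
    let R := Rgl11 k q
    let ξv : I2 2 → k := vd k - va k
    Br R Rinv Rtil (vb k) (vc k) = (-(q ^ 2 - 1)) • ξv
    ∧ Br R Rinv Rtil (vb k) (vc k) = (q ^ 2) • Br R Rinv Rtil (vc k) (vb k)
    ∧ Br R Rinv Rtil (va k) (va k) = va k
    ∧ Br R Rinv Rtil (va k) (vb k) = ((q⁻¹) ^ 2) • vb k
    ∧ Br R Rinv Rtil (va k) (vc k) = (q ^ 2) • vc k
    ∧ Br R Rinv Rtil ξv (va k) = (-((q ^ 2 - 1) ^ 2 * (q⁻¹) ^ 2)) • ξv := by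
  have hRi : Rinv = RinvE k q := by
    calc Rinv = Rinv * (Rgl11 k q * RinvE k q) := by rw [RinvE_left q hq0, mul_one]
      _ = (Rinv * Rgl11 k q) * RinvE k q := by rw [mul_assoc]
      _ = RinvE k q := by rw [h2, one_mul]
  have hRt : Rtil = RtilE k q := Rtil_eq q hq0 Rtil ht
  subst hRi hRt
  have e1 : Br (Rgl11 k q) (RinvE k q) (RtilE k q) (vb k) (vc k)
      = braidedC (Rgl11 k q) (RinvE k q) (RtilE k q) (0, 1) (1, 0) :=
    Br_delta (Rgl11 k q) (RinvE k q) (RtilE k q) (0, 1) (1, 0)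
  have e2 : Br (Rgl11 k q) (RinvE k q) (RtilE k q) (vc k) (vb k)
      = braidedC (Rgl11 k q) (RinvE k q) (RtilE k q) (1, 0) (0, 1) :=
    Br_delta (Rgl11 k q) (RinvE k q) (RtilE k q) (1, 0) (0, 1)
  have e3 : Br (Rgl11 k q) (RinvE k q) (RtilE k q) (va k) (va k)
      = braidedC (Rgl11 k q) (RinvE k q) (RtilE k q) (0, 0) (0, 0) :=
    Br_delta (Rgl11 k q) (RinvE k q) (RtilE k q) (0, 0) (0, 0)
  have e4 : Br (Rgl11 k q) (RinvE k q) (RtilE k q) (va k) (vb k)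
      = braidedC (Rgl11 k q) (RinvE k q) (RtilE k q) (0, 0) (0, 1) :=
    Br_delta (Rgl11 k q) (RinvE k q) (RtilE k q) (0, 0) (0, 1)
  have e5 : Br (Rgl11 k q) (RinvE k q) (RtilE k q) (va k) (vc k)
      = braidedC (Rgl11 k q) (RinvE k q) (RtilE k q) (0, 0) (1, 0) :=
    Br_delta (Rgl11 k q) (RinvE k q) (RtilE k q) (0, 0) (1, 0)
  have e6 : Br (Rgl11 k q) (RinvE k q) (RtilE k q) (vd k - va k) (va k)
      = braidedC (Rgl11 k q) (RinvE k q) (RtilE k q) (1, 1) (0, 0)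
        - braidedC (Rgl11 k q) (RinvE k q) (RtilE k q) (0, 0) (0, 0) := by
    rw [Br_sub_left]
    exact congrArg₂ Sub.sub
      (Br_delta (Rgl11 k q) (RinvE k q) (RtilE k q) (1, 1) (0, 0))
      (Br_delta (Rgl11 k q) (RinvE k q) (RtilE k q) (0, 0) (0, 0))
  refine ⟨?_, ?_, ?_, ?_, ?_, ?_⟩ <;>
    [rw [e1]; rw [e1, e2]; rw [e3]; rw [e4]; rw [e5]; rw [e6]] <;>
    · funext K
      obtain ⟨k1, k2⟩ := K
      fin_cases k1 <;> fin_cases k2 <;>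
        · simp only [braidedC, Fin.sum_univ_two, Rgl11, RinvE, RtilE, Matrix.of_apply,
            Pi.sub_apply, Pi.smul_apply, smul_eq_mul, Prod.mk.injEq, Fin.isValue, va, vb,
            vc, vd]
          norm_num
          try field_simp
          try ring
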